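/- Let K be a locally compact Hausdorff space. Then there exists a continuous function f : K → ℝ vanishing at infinity with f(t) > 0 for every t ∈ K (a strictly positive element of C₀(K), i.e., C₀(K) is σ-unital) if and only if K is σ-compact. -/

import Mathlib

open ZeroAtInfty

open Set Filter Topology

/-- The `C*`-algebra `C₀(K)` is `σ`-unital (i.e., it contains a strictly positive element,
which for `C₀(K)` means an everywhere positive function vanishing at infinity)
if and only if `K` is `σ`-compact. -/
theorem strictly_positive_iff_sigmaCompact
    (K : Type*) [TopologicalSpace K] [LocallyCompactSpace K] [T2Space K] :
    (∃ f : C₀(K, ℝ), ∀ t : K, 0 < f t) ↔ SigmaCompactSpace K := by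
  constructor
  · rintro ⟨f, hf⟩
    have hz := zero_at_infty f
    choose C hC hC' using fun n : ℕ =>
      mem_cocompact.mp (hz (Metric.ball_mem_nhds (0:ℝ) (by positivity : (0:ℝ) < 1/(n+1))))
    refine ⟨⟨fun n => {x | 1/(n+1:ℝ) ≤ f x}, fun n => ?_, ?_⟩⟩
    · refine (hC n).of_isClosed_subset (isClosed_le continuous_const (map_continuous f)) ?_
      intro x hx
      by_contra hxC
      have := hC' n hxC
      simp only [mem_preimage, Metric.mem_ball, Real.dist_eq, sub_zero] at this
      have : f x < 1/(n+1:ℝ) := lt_of_abs_lt this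
      exact absurd hx (not_le.mpr this)
    · refine eq_univ_of_forall fun x => mem_iUnion.mpr ?_
      obtain ⟨n, hn⟩ := exists_nat_one_div_lt (hf x)
      exact ⟨n, hn.le⟩
  · intro hK
    set E := CompactExhaustion.choice K
    have hg : ∀ n : ℕ, ∃ g : C(K, ℝ), EqOn g 1 (E n) ∧ HasCompactSupport g ∧
        ∀ x, g x ∈ Icc (0:ℝ) 1 := fun n => by
      obtain ⟨g, h1, _, h3, h4⟩ := exists_continuous_one_zero_of_isCompact
        (E.isCompact n) isClosed_empty (disjoint_empty _)
      exact ⟨g, h1, h3, h4⟩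
    choose g hg1 hg2 hg3 using hg
    have hgnn : ∀ n x, 0 ≤ g n x := fun n x => (hg3 n x).1
    have hgle : ∀ n x, g n x ≤ 1 := fun n x => (hg3 n x).2
    have hbound : ∀ n (x : K), ‖(1/2:ℝ)^n * g n x‖ ≤ (1/2:ℝ)^n := by
      intro n x
      rw [Real.norm_eq_abs, abs_mul, abs_of_nonneg (by positivity), abs_of_nonneg (hgnn n x)]
      calc (1/2:ℝ)^n * g n x ≤ (1/2:ℝ)^n * 1 := by
            exact mul_le_mul_of_nonneg_left (hgle n x) (by positivity)
        _ = (1/2:ℝ)^n := mul_one _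
    have hsum : Summable (fun n : ℕ => (1/2:ℝ)^n) := summable_geometric_of_lt_one (by norm_num) (by norm_num)
    have hsummx : ∀ x : K, Summable (fun n : ℕ => (1/2:ℝ)^n * g n x) := fun x =>
      Summable.of_norm_bounded hsum (fun n => hbound n x)
    set F : K → ℝ := fun x => ∑' n, (1/2:ℝ)^n * g n x with hF
    have hcont : Continuous F :=
      continuous_tsum (fun n => continuous_const.mul (map_continuous (g n))) hsum
        (fun n x => hbound n x)
    have hpos : ∀ x, 0 < F x := by
      intro x
      obtain ⟨n, hn⟩ := E.exists_mem x
      refine Summable.tsum_pos (hsummx x) (fun m => mul_nonneg (by positivity) (hgnn m x)) n ?_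
      have : g n x = 1 := hg1 n hn
      rw [this, mul_one]
      positivity
    have hzero : Tendsto F (cocompact K) (𝓝 0) := by
      rw [Metric.tendsto_nhds]
      intro ε hε
      -- choose N with tail < ε
      have htail : Tendsto (fun N : ℕ => (1/2:ℝ)^N * 2) atTop (𝓝 0) := by
        simpa using (tendsto_pow_atTop_nhds_zero_of_lt_one (by norm_num : (0:ℝ) ≤ 1/2)
          (by norm_num)).mul_const 2
      obtain ⟨N, hN⟩ := (htail.eventually (gt_mem_nhds hε)).exists
      have hCcomp : IsCompact (⋃ n ∈ Finset.range N, tsupport (g n)) :=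
        (Finset.range N).isCompact_biUnion (fun n _ => hg2 n)
      rw [eventually_iff, mem_cocompact]
      refine ⟨_, hCcomp, fun x hx => ?_⟩
      simp only [mem_setOf_eq, Real.dist_eq, sub_zero]
      have hxout : ∀ n < N, g n x = 0 := by
        intro n hn
        by_contra h
        exact hx (mem_iUnion₂.mpr ⟨n, Finset.mem_range.mpr hn, subset_tsupport _ h⟩)
      have hFx : F x = ∑' n, (1/2:ℝ)^(n+N) * g (n+N) x := by
        simp only [hF]
        rw [← Summable.sum_add_tsum_nat_add N (hsummx x)]
        have : ∑ i ∈ Finset.range N, (1/2:ℝ)^i * g i x = 0 :=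
          Finset.sum_eq_zero fun i hi => by rw [hxout i (Finset.mem_range.mp hi), mul_zero]
        rw [this, zero_add]
      have hFle : F x ≤ (1/2:ℝ)^N * 2 := by
        rw [hFx]
        have h1 : ∑' n, (1/2:ℝ)^(n+N) * g (n+N) x ≤ ∑' n, (1/2:ℝ)^(n+N) := by
          refine Summable.tsum_le_tsum (fun n => ?_) ((hsummx x).comp_injective (add_left_injective N)) ?_
          · calc (1/2:ℝ)^(n+N) * g (n+N) x ≤ (1/2:ℝ)^(n+N) * 1 :=
                mul_le_mul_of_nonneg_left (hgle _ x) (by positivity)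
              _ = _ := mul_one _
          · exact (hsum.comp_injective (add_left_injective N))
        have h2 : ∑' n : ℕ, (1/2:ℝ)^(n+N) = (1/2:ℝ)^N * 2 := by
          simp_rw [pow_add, mul_comm]
          rw [tsum_mul_left, tsum_geometric_of_lt_one (by norm_num) (by norm_num)]
          norm_num [mul_comm]
        linarith [h1, h2 ▸ h1]
      have hFnn : 0 ≤ F x := tsum_nonneg (fun n => mul_nonneg (by positivity) (hgnn n x))
      rw [abs_of_nonneg hFnn]
      exact lt_of_le_of_lt hFle hN
    exact ⟨⟨⟨F, hcont⟩, hzero⟩, hpos⟩
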